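/- arXiv:1404.2378 — 2 statements merged into one kernel-verified Lean document; each statement's English description precedes it below -/
import Mathlib

section
/- For every positive real number x, the function F(x) = (x ln x − x)(J₀(x)² + J₁(x)²) satisfies F'(x) = ln(x)·J₀(x)² − (ln(x) − 2)·J₁(x)². Equivalently, for 0 < a < b, ∫_a^b ln(x) J₀(x)² dx = [(x ln x − x)(J₀(x)² + J₁(x)²)]_a^b + ∫_a^b (ln(x) − 2) J₁(x)² dx. -/
noncomputable def besselJ (n : ℕ) (x : ℝ) : ℝ :=
  ∑' k : ℕ, (-1 : ℝ) ^ k / (Nat.factorial k * Nat.factorial (k + n)) * (x / 2) ^ (2 * k + n)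

lemma summable_bessel_term (n : ℕ) (x : ℝ) :
    Summable fun k : ℕ => (-1 : ℝ) ^ k / (Nat.factorial k * Nat.factorial (k + n)) * (x / 2) ^ (2 * k + n) := by
  apply Summable.of_norm_bounded (g := fun k => |x|^n / 2^n * ((x/2)^2) ^ k / Nat.factorial k)
  · simpa [mul_div_assoc] using (Real.summable_pow_div_factorial ((x/2)^2)).mul_left (|x|^n / 2^n)
  · intro k
    have hfk : (1:ℝ) ≤ (Nat.factorial (k+n) : ℝ) :=
      mod_cast Nat.one_le_iff_ne_zero.mpr (Nat.factorial_ne_zero _)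
    have hfk0 : (0:ℝ) < (Nat.factorial k : ℝ) := mod_cast Nat.factorial_pos k
    have h1 : ‖(-1 : ℝ) ^ k / (Nat.factorial k * Nat.factorial (k + n)) * (x / 2) ^ (2 * k + n)‖
        = (|x|/2) ^ (2*k+n) / (Nat.factorial k * Nat.factorial (k + n)) := by
      simp only [Real.norm_eq_abs, abs_mul, abs_div, abs_pow, abs_neg, abs_one, one_pow,
        Nat.abs_cast, abs_two]
      ring
    rw [h1]
    have h2 : (|x|/2) ^ (2*k+n) = |x|^n/2^n * ((x/2)^2)^k := by
      rw [show ((x/2)^2 = (|x|/2)^2) by rw [div_pow, div_pow, sq_abs], ← pow_mul, ← div_pow]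
      rw [pow_add, pow_mul]
      ring
    rw [h2]
    calc |x|^n/2^n * ((x/2)^2)^k / (Nat.factorial k * Nat.factorial (k + n))
        ≤ |x|^n/2^n * ((x/2)^2)^k / (Nat.factorial k * 1) := by
          apply div_le_div_of_nonneg_left (by positivity) (by positivity)
          exact mul_le_mul_of_nonneg_left hfk (by positivity)
      _ = |x|^n/2^n * ((x/2)^2)^k / Nat.factorial k := by rw [mul_one]

lemma aux_bound (n k : ℕ) {R y : ℝ} (hR : 1 ≤ R) (hy : |y| ≤ R) :
    ‖(-1 : ℝ) ^ k / (Nat.factorial k * Nat.factorial (k + n)) *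
      ((2*k+n : ℕ) * (y/2) ^ (2*k+n-1) * (1/2))‖ ≤ R ^ n * (R^2) ^ k / Nat.factorial k := by
  have hfk : (1:ℝ) ≤ (Nat.factorial (k+n) : ℝ) :=
    mod_cast Nat.one_le_iff_ne_zero.mpr (Nat.factorial_ne_zero _)
  have hfk0 : (0:ℝ) < (Nat.factorial k : ℝ) := mod_cast Nat.factorial_pos k
  have h1 : ‖(-1 : ℝ) ^ k / (Nat.factorial k * Nat.factorial (k + n)) *
      ((2*k+n : ℕ) * (y/2) ^ (2*k+n-1) * (1/2))‖
      = ((2*k+n : ℕ) : ℝ) * (|y|/2) ^ (2*k+n-1) * (1/2) / (Nat.factorial k * Nat.factorial (k + n)) := by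
    simp only [Real.norm_eq_abs, abs_mul, abs_div, abs_pow, abs_neg, abs_one, one_pow,
      Nat.abs_cast, abs_two]
    ring
  rw [h1]
  set m := 2*k+n with hm
  have hy2 : |y|/2 ≤ R/2 := by linarith
  have hA : (|y|/2) ^ (m - 1) ≤ (R/2) ^ (m-1) := pow_le_pow_left₀ (by positivity) hy2 _
  have hB : (R/2) ^ (m-1) * (1/2) ≤ (R/2) ^ m := by
    cases m with
    | zero => norm_num
    | succ j =>
      simp only [Nat.succ_sub_one, pow_succ]
      exact mul_le_mul_of_nonneg_left (by linarith) (by positivity)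
  have hC : ((m : ℕ) : ℝ) ≤ 2 ^ m := by exact_mod_cast (Nat.lt_two_pow_self (n := m)).le
  have hD : (2:ℝ) ^ m * (R/2) ^ m = R ^ m := by rw [← mul_pow]; congr 1; ring
  have hE : R ^ m = R ^ n * (R^2) ^ k := by rw [hm, pow_add, ← pow_mul]; ring
  have hnum : ((m : ℕ) : ℝ) * (|y|/2) ^ (m-1) * (1/2) ≤ R ^ n * (R^2) ^ k := by
    have s1 : ((m : ℕ) : ℝ) * (|y|/2) ^ (m-1) * (1/2) ≤ ((m : ℕ) : ℝ) * ((R/2) ^ (m-1) * (1/2)) := by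
      rw [mul_assoc]
      exact mul_le_mul_of_nonneg_left (by
        exact mul_le_mul_of_nonneg_right hA (by norm_num)) (by positivity)
    have s2 : ((m : ℕ) : ℝ) * ((R/2) ^ (m-1) * (1/2)) ≤ ((m : ℕ) : ℝ) * (R/2) ^ m :=
      mul_le_mul_of_nonneg_left hB (by positivity)
    have s3 : ((m : ℕ) : ℝ) * (R/2) ^ m ≤ (2:ℝ)^m * (R/2) ^ m :=
      mul_le_mul_of_nonneg_right hC (by positivity)
    calc ((m : ℕ) : ℝ) * (|y|/2) ^ (m-1) * (1/2) ≤ _ := s1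
      _ ≤ _ := s2
      _ ≤ _ := s3
      _ = R ^ n * (R^2) ^ k := by rw [hD, hE]
  calc ((m : ℕ) : ℝ) * (|y|/2) ^ (m-1) * (1/2) / (Nat.factorial k * Nat.factorial (k + n))
      ≤ ((m : ℕ) : ℝ) * (|y|/2) ^ (m-1) * (1/2) / (Nat.factorial k * 1) := by
        apply div_le_div_of_nonneg_left (by positivity) (by positivity)
        exact mul_le_mul_of_nonneg_left hfk (by positivity)
    _ = ((m : ℕ) : ℝ) * (|y|/2) ^ (m-1) * (1/2) / (Nat.factorial k) := by rw [mul_one]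
    _ ≤ R ^ n * (R^2) ^ k / Nat.factorial k := by gcongr

lemma hasDerivAt_besselJ (n : ℕ) (x : ℝ) :
    HasDerivAt (besselJ n)
      (∑' k : ℕ, (-1 : ℝ) ^ k / (Nat.factorial k * Nat.factorial (k + n)) *
        ((2*k+n : ℕ) * (x/2) ^ (2*k+n-1) * (1/2))) x := by
  set R := |x| + 1 with hR
  have hR1 : 1 ≤ R := by rw [hR]; have := abs_nonneg x; linarith
  have hu : Summable fun k : ℕ => R ^ n * (R^2) ^ k / Nat.factorial k := by
    simpa [mul_div_assoc] using (Real.summable_pow_div_factorial (R^2)).mul_left (R ^ n)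
  exact hasDerivAt_tsum_of_isPreconnected hu Metric.isOpen_ball
    (convex_ball (0:ℝ) R).isPreconnected
    (fun k y _ => (((hasDerivAt_id y).div_const 2).pow (2*k+n)).const_mul _)
    (fun k y hy => by
      apply aux_bound n k hR1
      have := Metric.mem_ball.mp hy
      rw [Real.dist_eq, sub_zero] at this
      exact this.le)
    (Metric.mem_ball_self (by positivity))
    (summable_bessel_term n 0)
    (Metric.mem_ball.mpr (by rw [Real.dist_eq, sub_zero, hR]; linarith))

lemma summable_deriv_term (n : ℕ) (x : ℝ) :
    Summable fun k : ℕ => (-1 : ℝ) ^ k / (Nat.factorial k * Nat.factorial (k + n)) *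
      ((2*k+n : ℕ) * (x/2) ^ (2*k+n-1) * (1/2)) := by
  set R := |x| + 1 with hR
  have hR1 : 1 ≤ R := by rw [hR]; have := abs_nonneg x; linarith
  have hu : Summable fun k : ℕ => R ^ n * (R^2) ^ k / Nat.factorial k := by
    simpa [mul_div_assoc] using (Real.summable_pow_div_factorial (R^2)).mul_left (R ^ n)
  exact hu.of_norm_bounded (fun k => aux_bound n k hR1 (by rw [hR]; linarith))

lemma hasDerivAt_J0 (x : ℝ) : HasDerivAt (besselJ 0) (-(besselJ 1 x)) x := by
  have h := hasDerivAt_besselJ 0 x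
  convert h using 1
  rw [Summable.tsum_eq_zero_add (summable_deriv_term 0 x)]
  have h0 : (-1 : ℝ) ^ 0 / (Nat.factorial 0 * Nat.factorial (0 + 0)) *
      ((2*0+0 : ℕ) * (x/2) ^ (2*0+0-1) * (1/2)) = 0 := by norm_num
  rw [h0, zero_add]
  have hterm : ∀ k : ℕ, (-1 : ℝ) ^ (k+1) / (Nat.factorial (k+1) * Nat.factorial ((k+1) + 0)) *
      ((2*(k+1)+0 : ℕ) * (x/2) ^ (2*(k+1)+0-1) * (1/2))
      = -((-1 : ℝ) ^ k / (Nat.factorial k * Nat.factorial (k + 1)) * (x/2) ^ (2*k+1)) := by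
    intro k
    have hfk0 : ((Nat.factorial k : ℝ)) ≠ 0 := mod_cast Nat.factorial_ne_zero k
    have he : 2*(k+1)+0-1 = 2*k+1 := by omega
    rw [he]
    simp only [Nat.add_zero, Nat.factorial_succ, pow_succ]
    push_cast
    field_simp
  rw [tsum_congr hterm, tsum_neg]
  rfl

lemma hasDerivAt_J1 (x : ℝ) (hx : x ≠ 0) :
    HasDerivAt (besselJ 1) (besselJ 0 x - besselJ 1 x / x) x := by
  have h := hasDerivAt_besselJ 1 x
  convert h using 1
  unfold besselJ
  rw [← tsum_div_const, ← Summable.tsum_sub (summable_bessel_term 0 x)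
    ((summable_bessel_term 1 x).div_const x)]
  apply tsum_congr
  intro k
  have hfk0 : ((Nat.factorial k : ℝ)) ≠ 0 := mod_cast Nat.factorial_ne_zero k
  have he : 2*k+1-1 = 2*k := by omega
  rw [he]
  simp only [Nat.add_zero, Nat.factorial_succ]
  rw [pow_succ]
  push_cast
  field_simp
  ring

open Real MeasureTheory intervalIntegral

theorem stmt3 :
    (∀ x : ℝ, 0 < x →
      HasDerivAt (fun y : ℝ => (y * Real.log y - y) * ((besselJ 0 y) ^ 2 + (besselJ 1 y) ^ 2))
        (Real.log x * (besselJ 0 x) ^ 2 - (Real.log x - 2) * (besselJ 1 x) ^ 2) x) ∧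
    (∀ a b : ℝ, 0 < a → a < b →
      ∫ x in a..b, Real.log x * (besselJ 0 x) ^ 2 =
        ((b * Real.log b - b) * ((besselJ 0 b) ^ 2 + (besselJ 1 b) ^ 2)
          - (a * Real.log a - a) * ((besselJ 0 a) ^ 2 + (besselJ 1 a) ^ 2))
        + ∫ x in a..b, (Real.log x - 2) * (besselJ 1 x) ^ 2) := by
  have part1 : ∀ x : ℝ, 0 < x →
      HasDerivAt (fun y : ℝ => (y * Real.log y - y) * ((besselJ 0 y) ^ 2 + (besselJ 1 y) ^ 2))
        (Real.log x * (besselJ 0 x) ^ 2 - (Real.log x - 2) * (besselJ 1 x) ^ 2) x := by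
    intro x hx
    have hg : HasDerivAt (fun y : ℝ => y * Real.log y - y) (Real.log x) x := by
      have := (Real.hasDerivAt_mul_log hx.ne').sub (hasDerivAt_id x)
      rw [add_sub_cancel_right] at this
      exact this
    have hh : HasDerivAt (fun y : ℝ => (besselJ 0 y) ^ 2 + (besselJ 1 y) ^ 2)
        (2 * besselJ 0 x ^ 1 * (-(besselJ 1 x)) +
         2 * besselJ 1 x ^ 1 * (besselJ 0 x - besselJ 1 x / x)) x :=
      ((hasDerivAt_J0 x).pow 2).add ((hasDerivAt_J1 x hx.ne').pow 2)
    have := hg.mul hh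
    refine this.congr_deriv ?_
    have hxne : x ≠ 0 := hx.ne'
    linear_combination (-2 * besselJ 1 x ^ 2 * (Real.log x - 1)) * mul_inv_cancel₀ hxne
  refine ⟨part1, ?_⟩
  intro a b ha hab
  have hsub : Set.uIcc a b ⊆ Set.Ioi (0:ℝ) := by
    rw [Set.uIcc_of_le hab.le]
    intro y hy
    exact lt_of_lt_of_le ha hy.1
  have hcont0 : ContinuousOn (besselJ 0) (Set.uIcc a b) := fun y _ =>
    ((hasDerivAt_J0 y).continuousAt).continuousWithinAt
  have hcont1 : ContinuousOn (besselJ 1) (Set.uIcc a b) := fun y hy =>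
    ((hasDerivAt_J1 y (ne_of_gt (hsub hy))).continuousAt).continuousWithinAt
  have hlog : ContinuousOn Real.log (Set.uIcc a b) := fun y hy =>
    (Real.continuousAt_log (ne_of_gt (hsub hy))).continuousWithinAt
  have hint1 : IntervalIntegrable (fun x => Real.log x * (besselJ 0 x) ^ 2) volume a b :=
    (hlog.mul (hcont0.pow 2)).intervalIntegrable
  have hint2 : IntervalIntegrable (fun x => (Real.log x - 2) * (besselJ 1 x) ^ 2) volume a b :=
    (((hlog.sub continuousOn_const)).mul (hcont1.pow 2)).intervalIntegrable
  have key : ∫ x in a..b, (Real.log x * (besselJ 0 x) ^ 2 - (Real.log x - 2) * (besselJ 1 x) ^ 2)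
      = (b * Real.log b - b) * ((besselJ 0 b) ^ 2 + (besselJ 1 b) ^ 2)
        - (a * Real.log a - a) * ((besselJ 0 a) ^ 2 + (besselJ 1 a) ^ 2) := by
    apply intervalIntegral.integral_eq_sub_of_hasDerivAt
    · exact fun y hy => part1 y (hsub hy)
    · exact hint1.sub hint2
  rw [intervalIntegral.integral_sub hint1 hint2] at key
  linarith
end

section
/- Fix r > 0 and 0 < ω₁ < ω_F. Then ∫_{ω₁}^{ω_F} ln(ω) J₀(ωr)² dω = ω_F ln(ω_F)(J₀(ω_F r)² + J₁(ω_F r)²) − ω₁ ln(ω₁)(J₀(ω₁ r)² + J₁(ω₁ r)²) − ∫_{ω₁}^{ω_F} ( J₀(ωr)² − (ln(ω) − 1) J₁(ωr)² ) dω. -/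
open Real MeasureTheory intervalIntegral

/-- the k-th term of the Bessel series -/
noncomputable def bterm (n k : ℕ) (x : ℝ) : ℝ :=
  (-1 : ℝ) ^ k / (Nat.factorial k * Nat.factorial (k + n)) * (x / 2) ^ (2 * k + n)

/-- termwise derivative -/
noncomputable def bderiv (n k : ℕ) (x : ℝ) : ℝ :=
  (-1 : ℝ) ^ k / (Nat.factorial k * Nat.factorial (k + n)) *
    ((2 * k + n : ℕ) * (x / 2) ^ (2 * k + n - 1) * (1 / 2))

lemma besselJ_eq (n : ℕ) (x : ℝ) : besselJ n x = ∑' k, bterm n k x := rfl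

lemma bterm_hasDerivAt (n k : ℕ) (y : ℝ) : HasDerivAt (fun z => bterm n k z) (bderiv n k y) y := by
  have h : HasDerivAt (fun z : ℝ => (z / 2) ^ (2 * k + n))
      ((2 * k + n : ℕ) * (y / 2) ^ (2 * k + n - 1) * (1 / 2)) y := by
    simpa using ((hasDerivAt_id y).div_const 2).fun_pow (2 * k + n)
  simpa [bterm, bderiv] using h.const_mul ((-1 : ℝ) ^ k / (Nat.factorial k * Nat.factorial (k + n)))

lemma factorial_pos_real (k : ℕ) : (0 : ℝ) < (Nat.factorial k : ℝ) := by
  exact_mod_cast Nat.factorial_pos k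

lemma usummable (M : ℝ) (n : ℕ) : Summable (fun k : ℕ => M ^ (2 * k + n) / Nat.factorial k) := by
  have : (fun k : ℕ => M ^ (2 * k + n) / Nat.factorial k)
      = fun k : ℕ => M ^ n * ((M ^ 2) ^ k / Nat.factorial k) := by
    funext k
    rw [pow_add, pow_mul]
    ring
  rw [this]
  exact (Real.summable_pow_div_factorial (M ^ 2)).mul_left _

lemma bderiv_norm_le (n k : ℕ) {y M : ℝ} (hM : 1 ≤ M) (hy : |y| ≤ M) :
    ‖bderiv n k y‖ ≤ M ^ (2 * k + n) / Nat.factorial k := by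
  have hM0 : 0 < M := lt_of_lt_of_le one_pos hM
  have hy2 : |y / 2| ≤ M := by
    rw [abs_div]
    calc |y| / |(2 : ℝ)| = |y| / 2 := by norm_num
    _ ≤ M / 2 := by gcongr
    _ ≤ M := by linarith
  have hpow : |y / 2| ^ (2 * k + n - 1) ≤ M ^ (2 * k + n) :=
    (pow_le_pow_left₀ (abs_nonneg _) hy2 _).trans (pow_le_pow_right₀ hM (Nat.sub_le _ _))
  have hcoef : ((2 * k + n : ℕ) : ℝ) ≤ 2 * Nat.factorial (k + n) := by
    have h1 : (2 * k + n : ℕ) ≤ 2 * (k + n) := by omega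
    have h2 : (k + n : ℕ) ≤ Nat.factorial (k + n) := Nat.self_le_factorial _
    exact_mod_cast h1.trans (by omega : 2 * (k + n) ≤ 2 * Nat.factorial (k + n))
  have e1 : |((-1 : ℝ) ^ k / (Nat.factorial k * Nat.factorial (k + n)))|
      = 1 / (Nat.factorial k * Nat.factorial (k + n)) := by
    rw [abs_div, abs_pow, abs_neg, abs_one, one_pow]
    congr 1
    exact abs_of_pos (by positivity)
  have e2 : |(((2 * k + n : ℕ) : ℝ) * (y / 2) ^ (2 * k + n - 1) * (1 / 2))|
      = ((2 * k + n : ℕ) : ℝ) * |y / 2| ^ (2 * k + n - 1) * (1 / 2) := by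
    rw [abs_mul, abs_mul, abs_pow, Nat.abs_cast]
    norm_num
  have hnorm : ‖bderiv n k y‖ =
      1 / (Nat.factorial k * Nat.factorial (k + n)) *
        (((2 * k + n : ℕ) : ℝ) * |y / 2| ^ (2 * k + n - 1) * (1 / 2)) := by
    rw [bderiv, Real.norm_eq_abs, abs_mul, e1, e2]
  rw [hnorm]
  have hfk := factorial_pos_real k
  have hfkn := factorial_pos_real (k + n)
  calc 1 / (Nat.factorial k * Nat.factorial (k + n)) *
        (((2 * k + n : ℕ) : ℝ) * |y / 2| ^ (2 * k + n - 1) * (1 / 2))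
      ≤ 1 / (Nat.factorial k * Nat.factorial (k + n)) *
        ((2 * Nat.factorial (k + n)) * M ^ (2 * k + n) * (1 / 2)) := by
        gcongr
    _ = M ^ (2 * k + n) / Nat.factorial k := by field_simp

lemma bterm_norm_le (n k : ℕ) {y M : ℝ} (hM : 1 ≤ M) (hy : |y| ≤ M) :
    ‖bterm n k y‖ ≤ M ^ (2 * k + n) / Nat.factorial k := by
  have hM0 : 0 < M := lt_of_lt_of_le one_pos hM
  have hy2 : |y / 2| ≤ M := by
    rw [abs_div]
    calc |y| / |(2 : ℝ)| = |y| / 2 := by norm_num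
    _ ≤ M / 2 := by gcongr
    _ ≤ M := by linarith
  have hpow : |y / 2| ^ (2 * k + n) ≤ M ^ (2 * k + n) := pow_le_pow_left₀ (abs_nonneg _) hy2 _
  have hfk := factorial_pos_real k
  have hfkn := factorial_pos_real (k + n)
  have hfkn1 : (1 : ℝ) ≤ Nat.factorial (k + n) := by exact_mod_cast Nat.one_le_iff_ne_zero.mpr (Nat.factorial_pos _).ne'
  have hnorm : ‖bterm n k y‖ =
      1 / (Nat.factorial k * Nat.factorial (k + n)) * |y / 2| ^ (2 * k + n) := by
    rw [bterm, Real.norm_eq_abs, abs_mul, abs_div, abs_pow, abs_neg, abs_one, one_pow, abs_pow]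
    congr 2
    exact abs_of_pos (by positivity)
  rw [hnorm]
  calc 1 / (Nat.factorial k * Nat.factorial (k + n)) * |y / 2| ^ (2 * k + n)
      ≤ 1 / (Nat.factorial k * 1) * M ^ (2 * k + n) := by gcongr <;> positivity
    _ = M ^ (2 * k + n) / Nat.factorial k := by field_simp

lemma summable_bterm (n : ℕ) (x : ℝ) : Summable (fun k => bterm n k x) := by
  set M := |x| + 1 with hM
  have hM1 : 1 ≤ M := by have := abs_nonneg x; linarith
  have hx : |x| ≤ M := by linarith
  exact Summable.of_norm_bounded (usummable M n) fun k => bterm_norm_le n k hM1 hx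

lemma summable_bderiv (n : ℕ) (x : ℝ) : Summable (fun k => bderiv n k x) := by
  set M := |x| + 1 with hM
  have hM1 : 1 ≤ M := by have := abs_nonneg x; linarith
  have hx : |x| ≤ M := by linarith
  exact Summable.of_norm_bounded (usummable M n) fun k => bderiv_norm_le n k hM1 hx

lemma besselJ_hasDerivAt (n : ℕ) (x : ℝ) :
    HasDerivAt (besselJ n) (∑' k, bderiv n k x) x := by
  set M := |x| + 1 with hM
  have hM1 : 1 ≤ M := by have := abs_nonneg x; linarith
  have hxM : x ∈ Metric.ball (0 : ℝ) M := by
    simp [Real.dist_eq, abs_sub_comm]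
    linarith [abs_nonneg x]
  have h0M : (0 : ℝ) ∈ Metric.ball (0 : ℝ) M := by
    simp; linarith [abs_nonneg x]
  have := hasDerivAt_tsum_of_isPreconnected
    (u := fun k : ℕ => M ^ (2 * k + n) / Nat.factorial k)
    (g := fun k => bterm n k) (g' := fun k => bderiv n k)
    (usummable M n) Metric.isOpen_ball (convex_ball (0 : ℝ) M).isPreconnected
    (fun k y _ => bterm_hasDerivAt n k y)
    (fun k y hy => by
      have : |y| ≤ M := by
        have := Metric.mem_ball.mp hy
        rw [Real.dist_eq, sub_zero] at this
        linarith
      exact bderiv_norm_le n k hM1 this)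
    h0M
    (by
      apply summable_of_ne_finset_zero (s := {0})
      intro k hk
      simp only [Finset.mem_singleton] at hk
      have : (2 * k + n) ≠ 0 := by omega
      simp [bterm, zero_pow this])
    hxM
  exact this

lemma besselJ0_hasDerivAt (x : ℝ) : HasDerivAt (besselJ 0) (-besselJ 1 x) x := by
  have h := besselJ_hasDerivAt 0 x
  have key : ∑' k, bderiv 0 k x = -besselJ 1 x := by
    have hinj : Function.Injective (fun k : ℕ => k + 1) := fun a b h => by simpa using h
    have hsupp : Function.support (fun m => bderiv 0 m x) ⊆ Set.range (fun k : ℕ => k + 1) := by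
      intro m hm
      rcases m with _ | m
      · exfalso
        apply hm
        simp [bderiv]
      · exact ⟨m, rfl⟩
    have hshift : ∑' k, bderiv 0 (k + 1) x = ∑' k, bderiv 0 k x :=
      Function.Injective.tsum_eq hinj hsupp
    rw [← hshift, besselJ_eq, ← tsum_neg]
    apply tsum_congr
    intro k
    have hfact : (Nat.factorial (k + 1) : ℝ) = (k + 1) * Nat.factorial k := by
      exact_mod_cast Nat.factorial_succ k
    have hfk := (factorial_pos_real k).ne'
    simp only [bderiv, bterm]
    rw [show 2 * (k + 1) + 0 - 1 = 2 * k + 1 from by omega,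
      hfact]
    push_cast
    rw [pow_succ]
    field_simp
    ring
  rw [← key]
  exact h

lemma xbesselJ1_hasDerivAt (x : ℝ) :
    HasDerivAt (fun y => y * besselJ 1 y) (x * besselJ 0 x) x := by
  have h := (hasDerivAt_id x).mul (besselJ_hasDerivAt 1 x)
  have key : 1 * besselJ 1 x + x * ∑' k, bderiv 1 k x = x * besselJ 0 x := by
    rw [one_mul, ← tsum_mul_left, besselJ_eq 1, besselJ_eq 0, ← tsum_mul_left,
      ← Summable.tsum_add (summable_bterm 1 x) ((summable_bderiv 1 x).mul_left x)]
    apply tsum_congr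
    intro k
    have hfact : (Nat.factorial (k + 1) : ℝ) = (k + 1) * Nat.factorial k := by
      exact_mod_cast Nat.factorial_succ k
    have hfk := (factorial_pos_real k).ne'
    simp only [bterm, bderiv]
    rw [show 2 * k + 1 - 1 = 2 * k from by omega, hfact]
    push_cast
    rw [pow_succ]
    field_simp
    ring
  rw [← key]
  exact h

lemma besselJ1_hasDerivAt {x : ℝ} (hx : x ≠ 0) :
    HasDerivAt (besselJ 1) (besselJ 0 x - besselJ 1 x / x) x := by
  have h := (xbesselJ1_hasDerivAt x).div (hasDerivAt_id x) hx
  have heq : (fun y => y * besselJ 1 y / y) =ᶠ[nhds x] besselJ 1 := by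
    filter_upwards [eventually_ne_nhds hx] with y hy
    rw [mul_comm, mul_div_assoc, div_self hy, mul_one]
  have h2 := h.congr_of_eventuallyEq heq.symm
  refine h2.congr_deriv ?_
  simp only [id]
  field_simp

lemma besselJ0_comp_hasDerivAt (r : ℝ) (ω : ℝ) :
    HasDerivAt (fun ω => besselJ 0 (ω * r)) (-besselJ 1 (ω * r) * r) ω :=
  ((besselJ0_hasDerivAt (ω * r)).comp (h := fun ω => ω * r) ω (by simpa using (hasDerivAt_id ω).mul_const r) :)

lemma besselJ1_comp_hasDerivAt {r ω : ℝ} (h : ω * r ≠ 0) :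
    HasDerivAt (fun ω => besselJ 1 (ω * r))
      ((besselJ 0 (ω * r) - besselJ 1 (ω * r) / (ω * r)) * r) ω :=
  ((besselJ1_hasDerivAt h).comp (h := fun ω => ω * r) ω (by simpa using (hasDerivAt_id ω).mul_const r) :)

lemma G_hasDerivAt {r ω : ℝ} (hr : 0 < r) (hω : 0 < ω) :
    HasDerivAt (fun ω => ω * Real.log ω * ((besselJ 0 (ω * r)) ^ 2 + (besselJ 1 (ω * r)) ^ 2))
      (Real.log ω * (besselJ 0 (ω * r)) ^ 2 +
        ((besselJ 0 (ω * r)) ^ 2 - (Real.log ω - 1) * (besselJ 1 (ω * r)) ^ 2)) ω := by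
  have hωr : ω * r ≠ 0 := by positivity
  have h0 := besselJ0_comp_hasDerivAt r ω
  have h1 := besselJ1_comp_hasDerivAt (r := r) (ω := ω) hωr
  have hlog := Real.hasDerivAt_log hω.ne'
  have hmain := ((hasDerivAt_id ω).mul hlog).mul ((h0.pow 2).add (h1.pow 2))
  refine hmain.congr_deriv ?_
  simp only [id, Pi.pow_apply, Pi.add_apply, Pi.mul_apply]
  have hω' : ω ≠ 0 := hω.ne'
  have hr' : r ≠ 0 := hr.ne'
  field_simp
  ring

theorem stmt6 (r ω₁ ωF : ℝ) (hr : 0 < r) (h1 : 0 < ω₁) (h1F : ω₁ < ωF) :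
    ∫ ω in ω₁..ωF, Real.log ω * (besselJ 0 (ω * r)) ^ 2 =
      ωF * Real.log ωF * ((besselJ 0 (ωF * r)) ^ 2 + (besselJ 1 (ωF * r)) ^ 2)
      - ω₁ * Real.log ω₁ * ((besselJ 0 (ω₁ * r)) ^ 2 + (besselJ 1 (ω₁ * r)) ^ 2)
      - ∫ ω in ω₁..ωF,
          ((besselJ 0 (ω * r)) ^ 2 - (Real.log ω - 1) * (besselJ 1 (ω * r)) ^ 2) := by
  have huIcc : Set.uIcc ω₁ ωF = Set.Icc ω₁ ωF := Set.uIcc_of_le h1F.le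
  have hpos : ∀ ω ∈ Set.uIcc ω₁ ωF, 0 < ω := by
    intro ω hω
    rw [huIcc, Set.mem_Icc] at hω
    linarith [hω.1]
  have hcont0 : ContinuousOn (fun ω => besselJ 0 (ω * r)) (Set.uIcc ω₁ ωF) := by
    intro ω hω
    exact ((besselJ0_comp_hasDerivAt r ω).continuousAt).continuousWithinAt
  have hcont1 : ContinuousOn (fun ω => besselJ 1 (ω * r)) (Set.uIcc ω₁ ωF) := by
    intro ω hω
    have : ω * r ≠ 0 := by have := hpos ω hω; positivity
    exact ((besselJ1_comp_hasDerivAt this).continuousAt).continuousWithinAt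
  have hclog : ContinuousOn Real.log (Set.uIcc ω₁ ωF) := by
    intro ω hω
    exact (Real.continuousAt_log (hpos ω hω).ne').continuousWithinAt
  have hint1 : IntervalIntegrable (fun ω => Real.log ω * (besselJ 0 (ω * r)) ^ 2)
      volume ω₁ ωF :=
    (hclog.mul (hcont0.pow 2)).intervalIntegrable
  have hint2 : IntervalIntegrable
      (fun ω => (besselJ 0 (ω * r)) ^ 2 - (Real.log ω - 1) * (besselJ 1 (ω * r)) ^ 2)
      volume ω₁ ωF :=
    ((hcont0.pow 2).sub (((hclog.sub continuousOn_const)).mul (hcont1.pow 2))).intervalIntegrable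
  have hftc := intervalIntegral.integral_eq_sub_of_hasDerivAt
    (f := fun ω => ω * Real.log ω * ((besselJ 0 (ω * r)) ^ 2 + (besselJ 1 (ω * r)) ^ 2))
    (f' := fun ω => Real.log ω * (besselJ 0 (ω * r)) ^ 2 +
      ((besselJ 0 (ω * r)) ^ 2 - (Real.log ω - 1) * (besselJ 1 (ω * r)) ^ 2))
    (fun ω hω => G_hasDerivAt hr (hpos ω hω)) (hint1.add hint2)
  rw [intervalIntegral.integral_add hint1 hint2] at hftc
  linarith
end
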